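/- On Ω_γ the vector field (G₁, G₂) is Hamiltonian with Hamiltonian G: G₁ = ∂G/∂W and G₂ = −∂G/∂θ on Ω_γ; consequently, if (θ, W) : I → Ω_γ is a differentiable solution on an interval I of dθ/dt = G₁(θ,W), dW/dt = G₂(θ,W), then t ↦ G(θ(t), W(t)) is constant on I. -/

import Mathlib

noncomputable section

open Real Set

/-- The inverse hyperbolic tangent, artanh x = (1/2) log((1+x)/(1−x)). -/
def artanh (x : ℝ) : ℝ := 1 / 2 * Real.log ((1 + x) / (1 - x))

/-- θ_γ = artanh(1/√γ), the unique positive solution of cosh θ = √γ sinh θ. -/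
def thetaG (γ : ℝ) : ℝ := _root_.artanh (1 / Real.sqrt γ)

/-- The phase space Ω_γ. -/
def OmegaG (γ : ℝ) : Set (ℝ × ℝ) :=
  {p | 0 < p.1 ∧ p ≠ (thetaG γ, 0)}

/-- Q(θ,W) = (d/γ)(cosh θ − √γ sinh θ)² + W². -/
def Qfun (d γ θ W : ℝ) : ℝ :=
  d / γ * (Real.cosh θ - Real.sqrt γ * Real.sinh θ) ^ 2 + W ^ 2

/-- G₁(θ,W) = −α√γ W / Q(θ,W)^{3/2}. -/
def G1 (α d γ θ W : ℝ) : ℝ :=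
  -(α * Real.sqrt γ * W) / Qfun d γ θ W ^ ((3 : ℝ) / 2)

/-- G₂(θ,W). -/
def G2 (α d γ θ W : ℝ) : ℝ :=
  -(1 / Real.sqrt d) * (γ ^ ((3 : ℝ) / 2) / Real.cosh θ + 1 / Real.sinh θ) +
    α * d * (Real.sinh θ - Real.sqrt γ * Real.cosh θ) *
        (Real.cosh θ - Real.sqrt γ * Real.sinh θ) /
      (Real.sqrt γ * Qfun d γ θ W ^ ((3 : ℝ) / 2))

/-- The Hamiltonian G(θ,W). -/
def GHam (α d γ θ W : ℝ) : ℝ :=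
  1 / Real.sqrt d *
      (2 * γ ^ ((3 : ℝ) / 2) * Real.arctan (Real.tanh (θ / 2)) +
        Real.log (Real.tanh (θ / 2))) +
    α * Real.sqrt γ / Qfun d γ θ W ^ ((1 : ℝ) / 2)

/-- If cosh θ = √γ sinh θ then θ = θ_γ. -/
lemma key_theta (γ θ : ℝ) (hγ : 1 < γ)
    (h : Real.cosh θ - Real.sqrt γ * Real.sinh θ = 0) : θ = thetaG γ := by
  have hγ0 : (0:ℝ) < γ := by linarith
  have hg1 : 1 < Real.sqrt γ := by
    have := Real.sqrt_lt_sqrt (by norm_num : (0:ℝ) ≤ 1) hγ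
    simpa using this
  set g := Real.sqrt γ with hg
  have hg0 : (0:ℝ) < g := by linarith
  have hx : (0:ℝ) < Real.exp θ := Real.exp_pos θ
  have h2 : Real.exp θ ^ 2 * (g - 1) = g + 1 := by
    have hc := Real.cosh_eq θ
    have hs := Real.sinh_eq θ
    rw [hc, hs, Real.exp_neg] at h
    field_simp at h
    nlinarith [h]
  have hR : Real.exp θ ^ 2 = (g + 1) / (g - 1) := by
    rw [eq_div_iff (by linarith : g - 1 ≠ 0)]
    exact h2
  have he2 : Real.exp (2 * θ) = (g + 1) / (g - 1) := by
    rw [two_mul, Real.exp_add, ← sq, hR]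
  have hlog : 2 * θ = Real.log ((g + 1) / (g - 1)) := by
    rw [← he2, Real.log_exp]
  have hT : thetaG γ = 1 / 2 * Real.log ((g + 1) / (g - 1)) := by
    unfold thetaG _root_.artanh
    have hden : (0:ℝ) < 1 - 1 / g := by
      rw [sub_pos]; exact (div_lt_one hg0).2 hg1
    rw [show (1 + 1 / g) / (1 - 1 / g) = (g + 1) / (g - 1) by
      rw [div_eq_div_iff (ne_of_gt hden) (by linarith : g - 1 ≠ (0:ℝ))]
      field_simp]
  rw [hT]; linarith

/-- On Ω_γ, Q is positive. -/
lemma Qpos (d γ θ W : ℝ) (hd : 0 < d) (hγ : 1 < γ)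
    (hmem : (θ, W) ∈ OmegaG γ) : 0 < Qfun d γ θ W := by
  obtain ⟨hθ, hne⟩ := hmem
  have hγ0 : (0:ℝ) < γ := by linarith
  have h1 : 0 ≤ d / γ * (Real.cosh θ - Real.sqrt γ * Real.sinh θ) ^ 2 := by positivity
  have h2 : 0 ≤ W ^ 2 := sq_nonneg W
  rcases lt_or_eq_of_le (by simpa [Qfun] using add_nonneg h1 h2) with h | h
  · exact h
  · exfalso
    have hu : Real.cosh θ - Real.sqrt γ * Real.sinh θ = 0 ∧ W = 0 := by
      constructor
      · by_contra hu0
        have : 0 < d / γ * (Real.cosh θ - Real.sqrt γ * Real.sinh θ) ^ 2 := by positivity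
        nlinarith
      · by_contra hw0
        have : 0 < W ^ 2 := by positivity
        nlinarith
    exact hne (by rw [Prod.mk.injEq]; exact ⟨key_theta γ θ hγ hu.1, hu.2⟩)

/-- The derivative of the θ-only part of the Hamiltonian. -/
lemma thetaPartDeriv (d γ θ : ℝ) (hd : 0 < d) (hθ : 0 < θ) :
    HasDerivAt (fun s => 1 / Real.sqrt d *
      (2 * γ ^ ((3 : ℝ) / 2) * Real.arctan (Real.tanh (s / 2)) +
        Real.log (Real.tanh (s / 2))))
      (1 / Real.sqrt d * (γ ^ ((3 : ℝ) / 2) / Real.cosh θ + 1 / Real.sinh θ)) θ := by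
  have hd0 : (0:ℝ) < Real.sqrt d := Real.sqrt_pos.2 hd
  have hsh : 0 < Real.sinh (θ/2) := Real.sinh_pos_iff.2 (by linarith)
  have hch : 0 < Real.cosh (θ/2) := Real.cosh_pos _
  have hth : 0 < Real.tanh (θ/2) := by
    rw [Real.tanh_eq_sinh_div_cosh]; positivity
  have htanh : HasDerivAt (fun s : ℝ => Real.tanh (s/2)) (1/(2 * Real.cosh (θ/2)^2)) θ := by
    have h1 : HasDerivAt (fun s : ℝ => s/2) (1/2) θ := (hasDerivAt_id θ).div_const 2
    have hs : HasDerivAt (fun s : ℝ => Real.sinh (s/2)) (Real.cosh (θ/2) * (1/2)) θ :=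
      (Real.hasDerivAt_sinh _).comp θ h1
    have hc : HasDerivAt (fun s : ℝ => Real.cosh (s/2)) (Real.sinh (θ/2) * (1/2)) θ :=
      (Real.hasDerivAt_cosh _).comp θ h1
    have hdiv := hs.div hc (ne_of_gt hch)
    have heq : (fun s : ℝ => Real.tanh (s/2)) = fun s : ℝ => Real.sinh (s/2) / Real.cosh (s/2) := by
      funext s; rw [Real.tanh_eq_sinh_div_cosh]
    rw [heq]
    refine hdiv.congr_deriv (Eq.symm ?_)
    have h2 := Real.cosh_sq_sub_sinh_sq (θ/2)
    rw [div_eq_div_iff (by positivity) (by positivity)]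
    linear_combination (-(Real.cosh (θ/2)^2)) * h2
  have ha : HasDerivAt (fun s : ℝ => Real.arctan (Real.tanh (s/2)))
      (1 / (1 + Real.tanh (θ/2)^2) * (1/(2*Real.cosh (θ/2)^2))) θ := htanh.arctan
  have hl : HasDerivAt (fun s : ℝ => Real.log (Real.tanh (s/2)))
      ((1/(2*Real.cosh (θ/2)^2)) / Real.tanh (θ/2)) θ := htanh.log (ne_of_gt hth)
  have hsum := ((ha.const_mul (2 * γ ^ ((3:ℝ)/2))).add hl).const_mul (1 / Real.sqrt d)
  refine hsum.congr_deriv (Eq.symm ?_)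
  have hc2 : Real.cosh θ = Real.cosh (θ/2)^2 + Real.sinh (θ/2)^2 := by
    rw [← Real.cosh_two_mul]; congr 1; ring
  have hs2 : Real.sinh θ = 2 * Real.sinh (θ/2) * Real.cosh (θ/2) := by
    rw [← Real.sinh_two_mul]; congr 1; ring
  rw [Real.tanh_eq_sinh_div_cosh, hc2, hs2]
  have h2 := Real.cosh_sq_sub_sinh_sq (θ/2)
  have hne1 : Real.cosh (θ/2)^2 + Real.sinh (θ/2)^2 ≠ 0 := by positivity
  field_simp

/-- The full Fréchet derivative of the Hamiltonian on Ω_γ. -/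
lemma GHamFDeriv (α d γ θ W : ℝ) (hα : 0 < α) (hd : 0 < d) (hγ : 1 < γ)
    (hmem : (θ, W) ∈ OmegaG γ) :
    HasFDerivAt (fun p : ℝ × ℝ => GHam α d γ p.1 p.2)
      ((-G2 α d γ θ W) • (ContinuousLinearMap.fst ℝ ℝ ℝ) +
       (G1 α d γ θ W) • (ContinuousLinearMap.snd ℝ ℝ ℝ)) (θ, W) := by
  have hθ : 0 < θ := hmem.1
  have hq : 0 < Qfun d γ θ W := Qpos d γ θ W hd hγ hmem
  have hFθ := thetaPartDeriv d γ θ hd hθ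
  have hγ0 : (0:ℝ) < γ := by linarith
  have hg1 : 1 < Real.sqrt γ := by
    have := Real.sqrt_lt_sqrt (by norm_num : (0:ℝ) ≤ 1) hγ
    simpa using this
  have hg0 : (0:ℝ) < Real.sqrt γ := by linarith
  have hgg : Real.sqrt γ * Real.sqrt γ = γ := Real.mul_self_sqrt hγ0.le
  have hd0 : (0:ℝ) < Real.sqrt d := Real.sqrt_pos.2 hd
  have hch : (0:ℝ) < Real.cosh θ := Real.cosh_pos θ
  have hsh : (0:ℝ) < Real.sinh θ := Real.sinh_pos_iff.2 hθ
  have hqne : Qfun d γ θ W ≠ 0 := ne_of_gt hq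
  have hQnn : ∀ p : ℝ × ℝ, 0 ≤ Qfun d γ p.1 p.2 := by
    intro p; unfold Qfun; positivity
  have hfun : (fun p : ℝ × ℝ => GHam α d γ p.1 p.2) =
      fun p : ℝ × ℝ => (1 / Real.sqrt d *
        (2 * γ ^ ((3 : ℝ) / 2) * Real.arctan (Real.tanh (p.1 / 2)) +
          Real.log (Real.tanh (p.1 / 2)))) +
        α * Real.sqrt γ * Qfun d γ p.1 p.2 ^ (-(1 : ℝ) / 2) := by
    funext p
    unfold GHam
    rw [show (-(1:ℝ)/2) = -((1:ℝ)/2) by ring, Real.rpow_neg (hQnn p)]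
    ring
  have hpart1 : HasFDerivAt (fun p : ℝ × ℝ => 1 / Real.sqrt d *
      (2 * γ ^ ((3 : ℝ) / 2) * Real.arctan (Real.tanh (p.1 / 2)) +
        Real.log (Real.tanh (p.1 / 2))))
      ((1 / Real.sqrt d * (γ ^ ((3 : ℝ) / 2) / Real.cosh θ + 1 / Real.sinh θ)) •
        (ContinuousLinearMap.fst ℝ ℝ ℝ)) (θ, W) :=
    hFθ.comp_hasFDerivAt (f := Prod.fst) (θ, W) hasFDerivAt_fst
  have hu : HasFDerivAt (fun p : ℝ × ℝ => Real.cosh p.1 - Real.sqrt γ * Real.sinh p.1)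
      ((Real.sinh θ - Real.sqrt γ * Real.cosh θ) • (ContinuousLinearMap.fst ℝ ℝ ℝ)) (θ, W) := by
    have h1 : HasDerivAt (fun s : ℝ => Real.cosh s - Real.sqrt γ * Real.sinh s)
        (Real.sinh θ - Real.sqrt γ * Real.cosh θ) θ :=
      (Real.hasDerivAt_cosh θ).sub ((Real.hasDerivAt_sinh θ).const_mul _)
    exact h1.comp_hasFDerivAt (f := Prod.fst) (θ, W) hasFDerivAt_fst
  have hQ : HasFDerivAt (fun p : ℝ × ℝ => Qfun d γ p.1 p.2)
      ((d / γ) • ((Real.cosh θ - Real.sqrt γ * Real.sinh θ) •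
          ((Real.sinh θ - Real.sqrt γ * Real.cosh θ) • (ContinuousLinearMap.fst ℝ ℝ ℝ)) +
        (Real.cosh θ - Real.sqrt γ * Real.sinh θ) •
          ((Real.sinh θ - Real.sqrt γ * Real.cosh θ) • (ContinuousLinearMap.fst ℝ ℝ ℝ))) +
       (W • (ContinuousLinearMap.snd ℝ ℝ ℝ) + W • (ContinuousLinearMap.snd ℝ ℝ ℝ))) (θ, W) := by
    have heq : (fun p : ℝ × ℝ => Qfun d γ p.1 p.2) =
        fun p : ℝ × ℝ => d / γ * ((Real.cosh p.1 - Real.sqrt γ * Real.sinh p.1) *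
          (Real.cosh p.1 - Real.sqrt γ * Real.sinh p.1)) + p.2 * p.2 := by
      funext p; unfold Qfun; ring
    rw [heq]
    have hsnd : HasFDerivAt (fun p : ℝ × ℝ => p.2) (ContinuousLinearMap.snd ℝ ℝ ℝ) ((θ, W) : ℝ × ℝ) :=
      hasFDerivAt_snd
    exact ((hu.mul hu).const_mul (d / γ)).add (hsnd.mul hsnd)
  have hpart2 := (hQ.rpow_const (p := -(1:ℝ)/2) (Or.inl hqne)).const_mul (α * Real.sqrt γ)
  rw [hfun]
  refine (hpart1.add hpart2).congr_fderiv (Eq.symm ?_)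
  apply ContinuousLinearMap.ext
  intro v
  have hr : Qfun d γ θ W ^ (-(1:ℝ)/2 - 1) = (Qfun d γ θ W ^ ((3:ℝ)/2))⁻¹ := by
    rw [show (-(1:ℝ)/2 - 1) = -((3:ℝ)/2) by ring, Real.rpow_neg hq.le]
  have hQ3 : (0:ℝ) < Qfun d γ θ W ^ ((3:ℝ)/2) := Real.rpow_pos_of_pos hq _
  simp only [ContinuousLinearMap.add_apply, ContinuousLinearMap.coe_smul', Pi.smul_apply,
    ContinuousLinearMap.coe_fst', ContinuousLinearMap.coe_snd', smul_eq_mul, hr]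
  unfold G1 G2
  set g := Real.sqrt γ with hgdef
  set c3 := γ ^ ((3:ℝ)/2) with hc3def
  set Q3 := Qfun d γ θ W ^ ((3:ℝ)/2) with hQ3def
  rw [← hgg]
  field_simp
  ring

/-- The vector field (G₁, G₂) is Hamiltonian on Ω_γ with Hamiltonian G
(G₁ = ∂G/∂W, G₂ = −∂G/∂θ), and consequently G is conserved along any
differentiable solution on an interval I. -/
theorem hamiltonian_structure_opposite_sign
    (α d γ : ℝ) (hα : 0 < α) (hd : 0 < d) (hγ : 1 < γ) :
    (∀ θ W : ℝ, (θ, W) ∈ OmegaG γ →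
      HasDerivAt (fun w => GHam α d γ θ w) (G1 α d γ θ W) W ∧
      HasDerivAt (fun s => GHam α d γ s W) (-G2 α d γ θ W) θ) ∧
    (∀ (I : Set ℝ), I.OrdConnected → ∀ θ W : ℝ → ℝ,
      (∀ t ∈ I, (θ t, W t) ∈ OmegaG γ) →
      (∀ t ∈ I, HasDerivWithinAt θ (G1 α d γ (θ t) (W t)) I t) →
      (∀ t ∈ I, HasDerivWithinAt W (G2 α d γ (θ t) (W t)) I t) →
      ∀ s ∈ I, ∀ t ∈ I, GHam α d γ (θ s) (W s) = GHam α d γ (θ t) (W t)) := by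
  constructor
  · intro θ W hmem
    have hG := GHamFDeriv α d γ θ W hα hd hγ hmem
    constructor
    · have hc : HasDerivAt (fun w : ℝ => ((θ, w) : ℝ × ℝ)) ((0, 1) : ℝ × ℝ) W :=
        (hasDerivAt_const W θ).prodMk (hasDerivAt_id W)
      have h := hG.comp_hasDerivAt W hc
      simp at h; exact h
    · have hc : HasDerivAt (fun s : ℝ => ((s, W) : ℝ × ℝ)) ((1, 0) : ℝ × ℝ) θ :=
        (hasDerivAt_id θ).prodMk (hasDerivAt_const θ W)
      have h := hG.comp_hasDerivAt θ hc
      simp at h; exact h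
  · intro I hI θ W hmem hθ' hW'
    have hzero : ∀ t ∈ I, HasDerivWithinAt (fun t => GHam α d γ (θ t) (W t)) 0 I t := by
      intro t ht
      have hG := GHamFDeriv α d γ (θ t) (W t) hα hd hγ (hmem t ht)
      have hc : HasDerivWithinAt (fun t => ((θ t, W t) : ℝ × ℝ))
          ((G1 α d γ (θ t) (W t), G2 α d γ (θ t) (W t)) : ℝ × ℝ) I t :=
        (hθ' t ht).prodMk (hW' t ht)
      have h := hG.comp_hasDerivWithinAt t hc
      simp only [ContinuousLinearMap.add_apply, ContinuousLinearMap.coe_smul', Pi.smul_apply,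
        ContinuousLinearMap.coe_fst', ContinuousLinearMap.coe_snd', smul_eq_mul] at h
      refine h.congr_deriv ?_
      ring
    intro s hs t ht
    have hconv : Convex ℝ I := hI.convex
    have key : ∀ x ∈ I, HasFDerivWithinAt (fun t => GHam α d γ (θ t) (W t))
        ((0 : ℝ →L[ℝ] ℝ)) I x := by
      intro x hx
      have h := (hzero x hx).hasFDerivWithinAt
      rwa [show (ContinuousLinearMap.toSpanSingleton ℝ (0:ℝ)) = 0 from by
        ext v; simp] at h
    have hb := hconv.norm_image_sub_le_of_norm_hasFDerivWithin_le
      (f' := fun _ => (0 : ℝ →L[ℝ] ℝ)) (C := 0)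
      key (fun x _ => by simp) hs ht
    have : ‖GHam α d γ (θ t) (W t) - GHam α d γ (θ s) (W s)‖ ≤ 0 := by
      simpa using hb
    have := norm_le_zero_iff.1 this
    linarith [sub_eq_zero.1 this]
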